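/- Let g₁'(z) = (1/z) log(1 + z²/(z-2)) + 4isε/(z² - 4) with s ∈ ℂ fixed, s ≠ 0. For all sufficiently small real ε ≠ 0, g₁' has exactly one zero in the disk |z| ≤ 1/2, and this zero z₁ satisfies z₁ = -2isε + 2s²ε² + O(ε³). -/
import Mathlib


/-- The function `g₁'(z) = (1/z) log(1 + z²/(z-2)) + 4isε/(z²-4)`, extended holomorphically
to `z = 0` (where the first term vanishes, by `log(1 + z²/(z-2)) = -z²/2 + O(z³)`). -/
noncomputable def gOneDeriv (s ε z : ℂ) : ℂ :=
  (if z = 0 then 0 else Complex.log (1 + z ^ 2 / (z - 2)) / z)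
    + 4 * Complex.I * s * ε / (z ^ 2 - 4)

open Complex Metric Topology Filter

noncomputable def fAux (z : ℂ) : ℂ := (z ^ 2 - 4) * Complex.log (1 + z ^ 2 / (z - 2)) / z

lemma fAux_zero : fAux 0 = 0 := by
  simp [fAux]

lemma norm_zsub2 {z : ℂ} (hz : ‖z‖ < 3 / 5) : 2 - ‖z‖ ≤ ‖z - 2‖ := by
  have := norm_sub_norm_le (2 : ℂ) z
  rw [norm_sub_rev] at this
  simpa using this

lemma norm_w_lt_one {z : ℂ} (hz : ‖z‖ < 3 / 5) : ‖z ^ 2 / (z - 2)‖ < 1 := by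
  have h2 := norm_zsub2 hz
  rw [norm_div, norm_pow]
  rw [div_lt_iff₀ (by linarith)]
  nlinarith [norm_nonneg z]

lemma slit_aux {z : ℂ} (hz : ‖z‖ < 3 / 5) : 1 + z ^ 2 / (z - 2) ∈ Complex.slitPlane :=
  Complex.mem_slitPlane_of_norm_lt_one (norm_w_lt_one hz)

lemma cubic_bound {z : ℂ} (hz : ‖z‖ ≤ 1 / 2) : ‖fAux z - (2 * z + z ^ 2)‖ ≤ 2 * ‖z‖ ^ 3 := by
  rcases eq_or_ne z 0 with rfl | hz0
  · simp [fAux_zero]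
  have hzlt : ‖z‖ < 3 / 5 := lt_of_le_of_lt hz (by norm_num)
  have h2 : (3 / 2 : ℝ) ≤ ‖z - 2‖ := by
    have := norm_zsub2 hzlt; linarith
  set w := z ^ 2 / (z - 2) with hw
  have hz2 : z - 2 ≠ 0 := by
    intro h; rw [sub_eq_zero] at h; rw [h] at hzlt; simp at hzlt; linarith
  have hwn : ‖w‖ ≤ (2 / 3) * ‖z‖ ^ 2 := by
    rw [hw, norm_div, norm_pow, div_le_iff₀ (by linarith)]
    nlinarith [norm_nonneg z]
  have hw16 : ‖w‖ ≤ 1 / 6 := by nlinarith [norm_nonneg z]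
  have hlog : ‖Complex.log (1 + w) - w‖ ≤ ‖w‖ ^ 2 * (1 - ‖w‖)⁻¹ / 2 :=
    Complex.norm_log_one_add_sub_self_le (by linarith)
  have hinv : (1 - ‖w‖)⁻¹ ≤ 6 / 5 := by
    rw [inv_le_comm₀ (by linarith) (by norm_num)]
    linarith
  have hlog2 : ‖Complex.log (1 + w) - w‖ ≤ (3 / 5) * ‖w‖ ^ 2 := by
    have h1 : ‖w‖ ^ 2 * (1 - ‖w‖)⁻¹ / 2 ≤ (3 / 5) * ‖w‖ ^ 2 := by
      nlinarith [sq_nonneg ‖w‖, norm_nonneg w]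
    linarith
  -- identity: fAux z - (2z + z²) = (z²-4) * (log(1+w) - w) / z
  have hid : fAux z - (2 * z + z ^ 2) = (z ^ 2 - 4) * (Complex.log (1 + w) - w) / z := by
    rw [fAux, hw]
    field_simp
    ring
  rw [hid]
  rw [norm_div, norm_mul]
  have hz4 : ‖z ^ 2 - 4‖ ≤ 17 / 4 := by
    calc ‖z ^ 2 - 4‖ ≤ ‖z ^ 2‖ + ‖(4 : ℂ)‖ := norm_sub_le _ _
    _ ≤ 17 / 4 := by
        rw [norm_pow]
        simp only [Complex.norm_ofNat]
        nlinarith [norm_nonneg z]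
  have hzpos : 0 < ‖z‖ := norm_pos_iff.mpr hz0
  rw [div_le_iff₀ hzpos]
  have hwz : ‖w‖ ^ 2 ≤ (4 / 9) * ‖z‖ ^ 4 := by nlinarith [norm_nonneg w, norm_nonneg z]
  have hl3 : ‖Complex.log (1 + w) - w‖ ≤ (4 / 15) * ‖z‖ ^ 4 := by nlinarith
  nlinarith [norm_nonneg z, norm_nonneg (Complex.log (1 + w) - w), pow_nonneg (norm_nonneg z) 4, pow_nonneg (norm_nonneg z) 3]

lemma fAux_hasDerivAt : HasDerivAt fAux 2 0 := by
  rw [hasDerivAt_iff_isLittleO]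
  rw [Asymptotics.isLittleO_iff]
  intro c hc
  have hδ : 0 < min (1 / 2) (c / 3) := by positivity
  filter_upwards [Metric.ball_mem_nhds (0 : ℂ) hδ] with z hz
  rw [Metric.mem_ball, dist_zero_right, lt_min_iff] at hz
  obtain ⟨hz1, hz2⟩ := hz
  have hcb := cubic_bound hz1.le
  have : ‖fAux z - fAux 0 - (z - 0) * 2‖ ≤ ‖z‖ ^ 2 + 2 * ‖z‖ ^ 3 := by
    rw [fAux_zero]
    have : fAux z - 0 - (z - 0) * 2 = (fAux z - (2 * z + z ^ 2)) + z ^ 2 := by ring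
    rw [this]
    calc ‖fAux z - (2 * z + z ^ 2) + z ^ 2‖ ≤ ‖fAux z - (2 * z + z ^ 2)‖ + ‖z ^ 2‖ := norm_add_le _ _
    _ ≤ ‖z‖ ^ 2 + 2 * ‖z‖ ^ 3 := by rw [norm_pow]; linarith
  simp only [smul_eq_mul, mul_comm]
  refine le_trans this ?_
  have h0 : (0:ℝ) ≤ ‖z‖ := norm_nonneg z
  calc ‖z‖ ^ 2 + 2 * ‖z‖ ^ 3 ≤ ‖z‖ * (‖z‖ + 2 * ‖z‖ ^ 2) := by ring_nf; nlinarith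
  _ ≤ ‖z‖ * c := by
      have : ‖z‖ + 2 * ‖z‖ ^ 2 ≤ c := by nlinarith
      nlinarith
  _ ≤ c * ‖z - 0‖ := by rw [sub_zero]; nlinarith

lemma fAux_diffOn : DifferentiableOn ℂ fAux (Metric.ball (0 : ℂ) (3 / 5)) := by
  intro z hz
  rw [Metric.mem_ball, dist_zero_right] at hz
  rcases eq_or_ne z 0 with rfl | hz0
  · exact fAux_hasDerivAt.differentiableAt.differentiableWithinAt
  · apply DifferentiableAt.differentiableWithinAt
    have hz2 : z - 2 ≠ 0 := by
      intro h; rw [sub_eq_zero] at h; rw [h] at hz; simp at hz; linarith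
    have hinner : DifferentiableAt ℂ (fun z : ℂ => 1 + z ^ 2 / (z - 2)) z := by
      apply DifferentiableAt.add (differentiableAt_const _)
      exact (differentiableAt_pow 2).div ((differentiableAt_id).sub (differentiableAt_const _)) hz2
    have hlog : DifferentiableAt ℂ (fun z : ℂ => Complex.log (1 + z ^ 2 / (z - 2))) z :=
      hinner.clog (slit_aux hz)
    exact (((differentiableAt_pow 2).sub (differentiableAt_const _)).mul hlog).div differentiableAt_id hz0


lemma fAux_strict : HasStrictDerivAt fAux 2 0 := by
  have ha : AnalyticAt ℂ fAux 0 :=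
    (fAux_diffOn.analyticOnNhd Metric.isOpen_ball) 0 (by simp)
  obtain ⟨p, hp⟩ := ha
  have h1 := hp.hasStrictDerivAt
  have h2 : ((p 1) fun _ => 1) = 2 := h1.hasDerivAt.unique fAux_hasDerivAt
  rwa [h2] at h1

lemma norm_4Ise (s : ℂ) (ε : ℝ) : ‖4 * Complex.I * s * (ε : ℂ)‖ = 4 * ‖s‖ * |ε| := by
  simp [norm_mul, Complex.norm_I, Complex.norm_real, Real.norm_eq_abs]

lemma zsq_ne {z : ℂ} (hz : ‖z‖ ≤ 1 / 2) : z ^ 2 - 4 ≠ 0 := by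
  intro h
  rw [sub_eq_zero] at h
  have : ‖z ^ 2‖ = ‖(4 : ℂ)‖ := by rw [h]
  rw [norm_pow] at this
  simp only [Complex.norm_ofNat] at this
  nlinarith [norm_nonneg z]

lemma char (s : ℂ) (hs : s ≠ 0) (ε : ℝ) (hε : ε ≠ 0) {z : ℂ} (hz : ‖z‖ ≤ 1 / 2) :
    gOneDeriv s (ε : ℂ) z = 0 ↔ z ≠ 0 ∧ fAux z = -(4 * Complex.I * s * (ε : ℂ)) := by
  have hεc : (ε : ℂ) ≠ 0 := Complex.ofReal_ne_zero.mpr hε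
  have h4 : 4 * Complex.I * s * (ε : ℂ) ≠ 0 := by
    simp [Complex.I_ne_zero, hs, hεc]
  have hz4 : z ^ 2 - 4 ≠ 0 := zsq_ne hz
  constructor
  · intro h
    have hz0 : z ≠ 0 := by
      rintro rfl
      have hne : (4 : ℂ) * Complex.I * s * (ε : ℂ) / ((0 : ℂ) ^ 2 - 4) ≠ 0 :=
        div_ne_zero h4 (by norm_num)
      rw [gOneDeriv, if_pos rfl, zero_add] at h
      exact hne h
    refine ⟨hz0, ?_⟩
    rw [gOneDeriv, if_neg hz0] at h
    rw [fAux]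
    field_simp at h ⊢
    linear_combination h
  · rintro ⟨hz0, h⟩
    rw [gOneDeriv, if_neg hz0]
    rw [fAux] at h
    field_simp at h ⊢
    linear_combination h

lemma apriori {z : ℂ} (hz : ‖z‖ ≤ 1 / 2) : ‖z‖ ≤ ‖fAux z‖ := by
  have hcb := cubic_bound hz
  have h1 : ‖2 * z + z ^ 2‖ ≤ ‖fAux z‖ + 2 * ‖z‖ ^ 3 := by
    calc ‖2 * z + z ^ 2‖ = ‖fAux z - (fAux z - (2 * z + z ^ 2))‖ := by ring_nf
    _ ≤ ‖fAux z‖ + ‖fAux z - (2 * z + z ^ 2)‖ := norm_sub_le _ _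
    _ ≤ ‖fAux z‖ + 2 * ‖z‖ ^ 3 := by linarith
  have h2 : 2 * ‖z‖ - ‖z‖ ^ 2 ≤ ‖2 * z + z ^ 2‖ := by
    have := norm_sub_norm_le (2 * z) (-(z ^ 2))
    simp only [sub_neg_eq_add, norm_neg, norm_mul, norm_pow] at this
    simp only [Complex.norm_ofNat] at this
    linarith
  nlinarith [norm_nonneg z, norm_nonneg (fAux z)]

lemma asym (s : ℂ) (ε : ℝ) {z : ℂ} (hz : ‖z‖ ≤ 1 / 2)
    (hf : fAux z = -(4 * Complex.I * s * (ε : ℂ))) (hρ : 4 * ‖s‖ * |ε| ≤ 1 / 2) :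
    ‖z - (-2 * Complex.I * s * (ε : ℂ) + 2 * s ^ 2 * (ε : ℂ) ^ 2)‖ ≤ 192 * ‖s‖ ^ 3 * |ε| ^ 3 := by
  set e : ℂ := -2 * Complex.I * s * (ε : ℂ) with he
  set g : ℂ := fAux z - (2 * z + z ^ 2) with hg
  have hgn : ‖g‖ ≤ 2 * ‖z‖ ^ 3 := cubic_bound hz
  have hzρ : ‖z‖ ≤ 4 * ‖s‖ * |ε| := by
    have := apriori hz
    rw [hf, norm_neg, norm_4Ise] at this
    exact this
  have hen : ‖e‖ = 2 * ‖s‖ * |ε| := by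
    rw [he]
    simp [norm_mul, Complex.norm_I, Complex.norm_real, Real.norm_eq_abs]
  have heq : 2 * z + z ^ 2 + g = 2 * e := by
    rw [hg, hf, he]; ring
  have h1 : z - e = -(z ^ 2) / 2 - g / 2 := by linear_combination heq / 2
  have htarget : -2 * Complex.I * s * (ε : ℂ) + 2 * s ^ 2 * (ε : ℂ) ^ 2 = e - e ^ 2 / 2 := by
    rw [he]; linear_combination 2 * s ^ 2 * (ε : ℂ) ^ 2 * Complex.I_sq
  rw [htarget]
  have h2 : z - (e - e ^ 2 / 2) = -((z - e) * (z + e)) / 2 - g / 2 := by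
    linear_combination h1
  rw [h2]
  set ρ := 4 * ‖s‖ * |ε| with hρdef
  have hρ0 : 0 ≤ ρ := by positivity
  have hze : ‖z - e‖ ≤ ρ ^ 2 / 2 + ρ ^ 3 := by
    rw [h1]
    calc ‖-(z ^ 2) / 2 - g / 2‖ ≤ ‖-(z ^ 2) / 2‖ + ‖g / 2‖ := norm_sub_le _ _
    _ = ‖z‖ ^ 2 / 2 + ‖g‖ / 2 := by rw [norm_div, norm_div, norm_neg, norm_pow]; norm_num
    _ ≤ ρ ^ 2 / 2 + ρ ^ 3 := by
        have e2 : ‖z‖ ^ 2 ≤ ρ ^ 2 := pow_le_pow_left₀ (norm_nonneg z) hzρ 2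
        have e3 : ‖z‖ ^ 3 ≤ ρ ^ 3 := pow_le_pow_left₀ (norm_nonneg z) hzρ 3
        linarith
  have hzpe : ‖z + e‖ ≤ (3 / 2) * ρ := by
    calc ‖z + e‖ ≤ ‖z‖ + ‖e‖ := norm_add_le _ _
    _ ≤ (3 / 2) * ρ := by rw [hen]; rw [hρdef] at hzρ ⊢; linarith
  calc ‖-((z - e) * (z + e)) / 2 - g / 2‖ ≤ ‖-((z - e) * (z + e)) / 2‖ + ‖g / 2‖ := norm_sub_le _ _
  _ = ‖z - e‖ * ‖z + e‖ / 2 + ‖g‖ / 2 := by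
      rw [norm_div, norm_div, norm_neg, norm_mul]; norm_num
  _ ≤ 3 * ρ ^ 3 := by
      have hz3 : ‖z‖ ^ 3 ≤ ρ ^ 3 := by
        apply pow_le_pow_left₀ (norm_nonneg z) hzρ
      nlinarith [norm_nonneg (z - e), norm_nonneg (z + e), norm_nonneg g, norm_nonneg z]
  _ ≤ 192 * ‖s‖ ^ 3 * |ε| ^ 3 := by rw [hρdef]; ring_nf; nlinarith [abs_nonneg ε, norm_nonneg s]


/-- For `s ≠ 0` and all sufficiently small real `ε ≠ 0`, `g₁'` has exactly one zero in the
disk `|z| ≤ 1/2`, and this zero satisfies `z₁ = -2isε + 2s²ε² + O(ε³)`. -/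
theorem gOneDeriv_unique_zero (s : ℂ) (hs : s ≠ 0) :
    ∃ ε₀ > 0, ∃ C > 0, ∀ ε : ℝ, ε ≠ 0 → |ε| < ε₀ →
      (∃! z : ℂ, ‖z‖ ≤ 1 / 2 ∧ gOneDeriv s (ε : ℂ) z = 0) ∧
      ∀ z : ℂ, ‖z‖ ≤ 1 / 2 → gOneDeriv s (ε : ℂ) z = 0 →
        ‖z - (-2 * Complex.I * s * (ε : ℂ) + 2 * s ^ 2 * (ε : ℂ) ^ 2)‖ ≤ C * |ε| ^ 3 := by
  have h4s1 : (0 : ℝ) < 4 * ‖s‖ + 1 := by positivity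
  have H := fAux_strict.hasStrictFDerivAt_equiv two_ne_zero
  set inv := H.localInverse _ _ _ with hinvdef
  have hleft := H.eventually_left_inverse
  have hright := H.eventually_right_inverse
  have htend := H.localInverse_tendsto
  rw [fAux_zero] at hright htend
  obtain ⟨r₁, hr₁, hL⟩ := Metric.eventually_nhds_iff.mp hleft
  have hball : ∀ᶠ y in 𝓝 (0 : ℂ), fAux (inv y) = y ∧ ‖inv y‖ < min r₁ (1 / 2) := by
    refine hright.and ?_
    have := htend (Metric.ball_mem_nhds (0 : ℂ) (lt_min hr₁ one_half_pos))
    filter_upwards [this] with y hy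
    rwa [Set.mem_preimage, Metric.mem_ball, dist_zero_right] at hy
  obtain ⟨r₂, hr₂, hR⟩ := Metric.eventually_nhds_iff.mp hball
  refine ⟨min (min r₁ r₂ / (4 * ‖s‖ + 1)) (1 / (8 * ‖s‖ + 1)),
    lt_min (by positivity) (by positivity), 192 * ‖s‖ ^ 3 + 1, by positivity, ?_⟩
  intro ε hε hεlt
  rw [lt_min_iff] at hεlt
  obtain ⟨hεa, hεb⟩ := hεlt
  have habs : (0 : ℝ) ≤ |ε| := abs_nonneg ε
  have hρr : 4 * ‖s‖ * |ε| < min r₁ r₂ := by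
    have h1 : |ε| * (4 * ‖s‖ + 1) < min r₁ r₂ := by
      rw [div_eq_mul_inv] at hεa
      calc |ε| * (4 * ‖s‖ + 1) < min r₁ r₂ * (4 * ‖s‖ + 1)⁻¹ * (4 * ‖s‖ + 1) := by
            apply mul_lt_mul_of_pos_right hεa h4s1
      _ = min r₁ r₂ := by field_simp
    nlinarith [norm_nonneg s]
  have hρhalf : 4 * ‖s‖ * |ε| ≤ 1 / 2 := by
    have h1 : |ε| * (8 * ‖s‖ + 1) < 1 := by
      rw [lt_div_iff₀ (by positivity)] at hεb
      linarith
    nlinarith [norm_nonneg s]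
  set y : ℂ := -(4 * Complex.I * s * (ε : ℂ)) with hydef
  have hyn : ‖y‖ = 4 * ‖s‖ * |ε| := by rw [hydef, norm_neg, norm_4Ise]
  have hyne : y ≠ 0 := by
    rw [hydef, neg_ne_zero]
    simp [Complex.I_ne_zero, hs, Complex.ofReal_ne_zero.mpr hε]
  obtain ⟨hfy, hsmall⟩ := hR (y := y) (by
    rw [dist_zero_right, hyn]
    exact lt_of_lt_of_le hρr (min_le_right _ _))
  set z₁ := inv y with hz₁def
  have hz₁half : ‖z₁‖ ≤ 1 / 2 := le_of_lt (lt_of_lt_of_le hsmall (min_le_right _ _))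
  have hz₁ne : z₁ ≠ 0 := by
    intro h
    rw [h] at hfy
    rw [fAux_zero] at hfy
    exact hyne hfy.symm
  have hzero : gOneDeriv s (ε : ℂ) z₁ = 0 := (char s hs ε hε hz₁half).mpr ⟨hz₁ne, hfy⟩
  have huniq : ∀ z : ℂ, ‖z‖ ≤ 1 / 2 → gOneDeriv s (ε : ℂ) z = 0 → z = z₁ := by
    intro z hznorm hzzero
    obtain ⟨hz0, hfz⟩ := (char s hs ε hε hznorm).mp hzzero
    have hzsmall : ‖z‖ ≤ 4 * ‖s‖ * |ε| := by
      have := apriori hznorm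
      rwa [hfz, norm_neg, norm_4Ise] at this
    have h1 : inv (fAux z) = z := hL (by
      rw [dist_zero_right]
      exact lt_of_le_of_lt hzsmall (lt_of_lt_of_le hρr (min_le_left _ _)))
    rw [hfz, ← hydef] at h1
    rw [← h1, hz₁def]
  constructor
  · exact ⟨z₁, ⟨hz₁half, hzero⟩, fun b hb => huniq b hb.1 hb.2⟩
  · intro z hznorm hzzero
    obtain ⟨_, hfz⟩ := (char s hs ε hε hznorm).mp hzzero
    have := asym s ε hznorm hfz hρhalf
    have h3 : (0 : ℝ) ≤ |ε| ^ 3 := by positivity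
    nlinarith
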